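/- (The model with the largest rescaler is a fixed point of the iteration.) Suppose i₁ ∈ {1,…,n} satisfies λ^{i₁}(j) = max_{1≤i≤n} λ^i(j) for every j ≥ 1 (the largest rescaler is always attained by model i₁). Then δ^{i₁}(j) = δ^{i₁}(1) for all j ≥ 1, and λ^{i₁}(j) = 1 for all j ≥ 2. -/
import Mathlib


open Filter

lemma sign_pos_mul' (c u : ℝ) (hc : 0 < c) : Real.sign (c * u) = Real.sign u := by
  rcases lt_trichotomy u 0 with h | h | h
  · rw [Real.sign_of_neg h, Real.sign_of_neg (mul_neg_of_pos_of_neg hc h)]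
  · simp [h]
  · rw [Real.sign_of_pos h, Real.sign_of_pos (mul_pos hc h)]

lemma sign_mul_abs' (x : ℝ) : Real.sign x * |x| = x := by
  rcases lt_trichotomy x 0 with h | h | h
  · rw [Real.sign_of_neg h, abs_of_neg h]; ring
  · simp [h]
  · rw [Real.sign_of_pos h, abs_of_pos h]; ring

lemma coord_key (n : ℕ) (i₁ : Fin n) (a l m : Fin n → ℝ) (u γ' ε' U' M' : ℝ)
    (ha : ∀ i, a i = l i * (m i * u))
    (hm : ∀ i, m i = 0 ∨ m i = 1)
    (hl0 : ∀ i, 0 ≤ l i)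
    (hlmax : ∀ i, l i ≤ l i₁)
    (hγ' : γ' = Real.sign (∑ i, a i))
    (hε' : γ' ≠ 0 → (∃ i, Real.sign (a i) = γ' ∧ |a i| = ε') ∧
      (∀ i, Real.sign (a i) = γ' → |a i| ≤ ε'))
    (hU' : U' = γ' * ε')
    (hM' : M' = if 0 < a i₁ * U' then 1 else 0) :
    M' * U' = a i₁ := by
  by_cases h0 : a i₁ = 0
  · rw [h0] at hM' ⊢
    simp at hM'
    rw [hM', zero_mul]
  · have hmi : m i₁ = 1 := by
      rcases hm i₁ with h | h
      · exfalso; apply h0; rw [ha i₁, h]; ring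
      · exact h
    have hai : a i₁ = l i₁ * u := by rw [ha i₁, hmi, one_mul]
    have hli : 0 < l i₁ := by
      rcases (hl0 i₁).lt_or_eq with h | h
      · exact h
      · exfalso; apply h0; rw [hai, ← h, zero_mul]
    have hsum : ∑ i, a i = (∑ i, l i * m i) * u := by
      rw [Finset.sum_mul]; apply Finset.sum_congr rfl; intro i _
      rw [ha i]; ring
    have hc : 0 < ∑ i, l i * m i := by
      have h1 : l i₁ * m i₁ ≤ ∑ i, l i * m i := by
        apply Finset.single_le_sum (f := fun i => l i * m i)
        · intro i _
          rcases hm i with h | h <;> simp [h, hl0 i]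
        · exact Finset.mem_univ i₁
      rw [hmi, mul_one] at h1
      linarith
    have hsgn : γ' = Real.sign (a i₁) := by
      rw [hγ', hsum, sign_pos_mul' _ _ hc, hai, sign_pos_mul' _ _ hli]
    have hγne : γ' ≠ 0 := by
      rw [hsgn]
      exact fun h => h0 (Real.sign_eq_zero_iff.mp h)
    obtain ⟨⟨i', hi's, hi'e⟩, hall⟩ := hε' hγne
    have habs : ∀ i, |a i| ≤ |a i₁| := by
      intro i
      rw [ha i, hai]
      have h1 : |l i * (m i * u)| = |l i| * |m i| * |u| := by
        rw [abs_mul, abs_mul]; ring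
      have h2 : |l i₁ * u| = |l i₁| * |u| := abs_mul _ _
      have h3 : |l i| * |m i| ≤ |l i₁| := by
        rcases hm i with h | h
        · simp [h, abs_nonneg]
        · rw [h, abs_one, mul_one, abs_of_nonneg (hl0 i), abs_of_nonneg (hl0 i₁)]
          exact hlmax i
      rw [h1, h2]
      exact mul_le_mul_of_nonneg_right h3 (abs_nonneg u)
    have hεle : ε' ≤ |a i₁| := hi'e ▸ habs i'
    have hεge : |a i₁| ≤ ε' := hall i₁ hsgn.symm
    have hεeq : ε' = |a i₁| := le_antisymm hεle hεge
    have hUeq : U' = a i₁ := by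
      rw [hU', hεeq, hsgn, sign_mul_abs' _]
    have hM1 : M' = 1 := by
      rw [hM', hUeq, if_pos (mul_self_pos.mpr h0)]
    rw [hM1, hUeq, one_mul]

theorem stmt12
    (n d : ℕ) (hn : 1 ≤ n) (hd : 1 ≤ d)
    (Δ : ℕ → Fin n → Fin d → ℝ)
    (γ ε U : ℕ → Fin d → ℝ)
    (M : ℕ → Fin n → Fin d → ℝ)
    (lam : ℕ → Fin n → ℝ)
    (hγ : ∀ (j : ℕ) k, γ (j+1) k = Real.sign (∑ i, Δ j i k))
    (hε : ∀ (j : ℕ) k, γ (j+1) k ≠ 0 →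
      (∃ i, Real.sign (Δ j i k) = γ (j+1) k ∧ |Δ j i k| = ε (j+1) k) ∧
      (∀ i, Real.sign (Δ j i k) = γ (j+1) k → |Δ j i k| ≤ ε (j+1) k))
    (hε0 : ∀ (j : ℕ) k, γ (j+1) k = 0 → ε (j+1) k = 0)
    (hU : ∀ (j : ℕ) k, U (j+1) k = γ (j+1) k * ε (j+1) k)
    (hM : ∀ (j : ℕ) i k, M (j+1) i k = if 0 < Δ j i k * U (j+1) k then 1 else 0)
    (hden : ∀ (j : ℕ) i, ∑ k, |M (j+1) i k * U (j+1) k| ≠ 0)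
    (hlam : ∀ (j : ℕ) i,
      lam (j+1) i = (∑ k, |Δ j i k|) / (∑ k, |M (j+1) i k * U (j+1) k|))
    (hstep : ∀ (j : ℕ) i k, Δ (j+1) i k = lam (j+1) i * (M (j+1) i k * U (j+1) k))
    (i₁ : Fin n)
    (hmax : ∀ (j : ℕ), 1 ≤ j → ∀ i : Fin n, lam j i ≤ lam j i₁) :
    (∀ (j : ℕ), 1 ≤ j → Δ j i₁ = Δ 1 i₁) ∧ (∀ (j : ℕ), 2 ≤ j → lam j i₁ = 1) := by
  have hlam0 : ∀ (j : ℕ) i, 0 ≤ lam (j+1) i := by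
    intro j i
    rw [hlam]
    exact div_nonneg (Finset.sum_nonneg fun k _ => abs_nonneg _)
      (Finset.sum_nonneg fun k _ => abs_nonneg _)
  have key : ∀ (j : ℕ) k, M (j+2) i₁ k * U (j+2) k = Δ (j+1) i₁ k := by
    intro j k
    exact coord_key n i₁ (fun i => Δ (j+1) i k) (fun i => lam (j+1) i)
      (fun i => M (j+1) i k) (U (j+1) k) (γ (j+2) k) (ε (j+2) k) (U (j+2) k)
      (M (j+2) i₁ k)
      (fun i => hstep j i k)
      (fun i => by show M (j+1) i k = 0 ∨ M (j+1) i k = 1; rw [hM j i k]; split <;> simp)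
      (fun i => hlam0 j i)
      (fun i => hmax (j+1) (by omega) i)
      (hγ (j+1) k)
      (hε (j+1) k)
      (hU (j+1) k)
      (hM (j+1) i₁ k)
  have lam1 : ∀ (j : ℕ), lam (j+2) i₁ = 1 := by
    intro j
    have hsum : ∑ k, |M (j+2) i₁ k * U (j+2) k| = ∑ k, |Δ (j+1) i₁ k| :=
      Finset.sum_congr rfl fun k _ => by rw [key j k]
    rw [hlam (j+1) i₁, hsum]
    exact div_self (by rw [← hsum]; exact hden (j+1) i₁)
  have fix : ∀ (j : ℕ), Δ (j+2) i₁ = Δ (j+1) i₁ := by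
    intro j
    funext k
    rw [hstep (j+1) i₁ k, lam1 j, one_mul, key j k]
  have main : ∀ (j : ℕ), Δ (j+1) i₁ = Δ 1 i₁ := by
    intro j
    induction j with
    | zero => rfl
    | succ m ih => rw [fix m, ih]
  constructor
  · intro j hj
    obtain ⟨m, rfl⟩ : ∃ m, j = m + 1 := ⟨j - 1, by omega⟩
    exact main m
  · intro j hj
    obtain ⟨m, rfl⟩ : ∃ m, j = m + 2 := ⟨j - 2, by omega⟩
    exact lam1 m
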